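/- If $P + \mathfrak{P} = \mathbb{R}^k$ with the open translates $\mathbf{r}+\mathfrak{P}^\circ$ ($\mathbf{r}\in P$) pairwise disjoint and $\mathbf{0}\in P$, then for every $\mathbf{x}\in\mathbb{R}_{>0}^k$ with $x_1+\cdots+x_k = 1$ there exists $\mathbf{r}\in P\setminus\{\mathbf{0}\}$ with $r_j \geq x_j$ for all $j$ and $r_1+\cdots+r_k = 2$. -/

import Mathlib

open Pointwise

private lemma l1_open (k : ℕ) : IsOpen {x : Fin k → ℝ | (∑ i, |x i|) < 1} := by
  have hc : Continuous fun x : Fin k → ℝ => ∑ i, |x i| :=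
    continuous_finset_sum _ fun i _ => (continuous_apply i).abs
  exact isOpen_lt hc continuous_const

private lemma mem_int (k : ℕ) (v : Fin k → ℝ) (h : (∑ i, |v i|) < 1) :
    v ∈ interior {x : Fin k → ℝ | (∑ i, |x i|) ≤ 1} := by
  have hsub : {x : Fin k → ℝ | (∑ i, |x i|) < 1} ⊆ {x : Fin k → ℝ | (∑ i, |x i|) ≤ 1} := by
    intro y hy
    simp only [Set.mem_setOf_eq] at hy ⊢
    exact hy.le
  exact interior_maximal hsub (l1_open k) h

/-- separation: distinct points of P are ≥ 2 apart in ℓ¹ -/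
private lemma sep_lemma (k : ℕ) (P : Set (Fin k → ℝ))
    (hdisj : ∀ r ∈ P, ∀ s ∈ P, r ≠ s →
      Disjoint {x : Fin k → ℝ | x - r ∈ interior {x : Fin k → ℝ | (∑ i, |x i|) ≤ 1}}
        {x : Fin k → ℝ | x - s ∈ interior {x : Fin k → ℝ | (∑ i, |x i|) ≤ 1}})
    : ∀ r ∈ P, ∀ s ∈ P, (∑ i, |r i - s i|) < 2 → r = s := by
  intro r hr s hs hlt
  by_contra hne
  have hd := hdisj r hr s hs hne
  rw [Set.disjoint_left] at hd
  set m : Fin k → ℝ := fun i => (r i + s i) / 2 with hm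
  have h1 : (∑ i, |(m - r) i|) < 1 := by
    have : ∀ i, |(m - r) i| = |r i - s i| / 2 := by
      intro i
      simp only [Pi.sub_apply, hm]
      rw [show (r i + s i) / 2 - r i = -((r i - s i)/2) by ring, abs_neg, abs_div]
      norm_num
    rw [Finset.sum_congr rfl fun i _ => this i, ← Finset.sum_div]
    linarith
  have h2 : (∑ i, |(m - s) i|) < 1 := by
    have : ∀ i, |(m - s) i| = |r i - s i| / 2 := by
      intro i
      simp only [Pi.sub_apply, hm]
      rw [show (r i + s i) / 2 - s i = (r i - s i)/2 by ring, abs_div]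
      norm_num
    rw [Finset.sum_congr rfl fun i _ => this i, ← Finset.sum_div]
    linarith
  exact hd (mem_int k (m - r) h1) (mem_int k (m - s) h2)

/-- If `P + 𝔓 = ℝ^k` with the open translates `r + 𝔓°` (`r ∈ P`) pairwise disjoint and
`0 ∈ P`, then for every `x ∈ ℝ_{>0}^k` with `∑ x_j = 1` there is `r ∈ P \ {0}` with
`r_j ≥ x_j` for all `j` and `∑ r_j = 2`. -/
theorem tiling_boundary_point_lemma
    (k : ℕ) (hk : 2 ≤ k) (P : Set (Fin k → ℝ))
    (hcover : P + {x : Fin k → ℝ | (∑ i, |x i|) ≤ 1} = Set.univ)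
    (hdisj : ∀ r ∈ P, ∀ s ∈ P, r ≠ s →
      Disjoint {x : Fin k → ℝ | x - r ∈ interior {x : Fin k → ℝ | (∑ i, |x i|) ≤ 1}}
        {x : Fin k → ℝ | x - s ∈ interior {x : Fin k → ℝ | (∑ i, |x i|) ≤ 1}})
    (h0 : (0 : Fin k → ℝ) ∈ P) :
    ∀ x : Fin k → ℝ, (∀ j, 0 < x j) → (∑ j, x j) = 1 →
      ∃ r ∈ P, r ≠ 0 ∧ (∀ j, x j ≤ r j) ∧ (∑ j, r j) = 2 := by
  intro x hx hsum
  haveI : NeZero k := ⟨by omega⟩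
  have hsep := sep_lemma k P hdisj
  have hsep0 : ∀ r ∈ P, r ≠ 0 → 2 ≤ ∑ i, |r i| := by
    intro r hr hne
    by_contra h
    push_neg at h
    exact hne (hsep r hr 0 h0 (by simpa using h))
  set t : ℕ → ℝ := fun n => 1 / ((n:ℝ) + 1) with ht
  have ht_pos : ∀ n, 0 < t n := by intro n; positivity
  have ht_le : ∀ n, t n ≤ 1 := by
    intro n
    rw [ht]
    rw [div_le_one (by positivity)]
    have : (0:ℝ) ≤ n := Nat.cast_nonneg n
    linarith
  have ht_mono : ∀ m n : ℕ, m ≤ n → t n ≤ t m := by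
    intro m n hmn
    apply one_div_le_one_div_of_le (by positivity)
    have : (m:ℝ) ≤ n := Nat.cast_le.mpr hmn
    linarith
  -- choose covering centers
  have hy : ∀ n : ℕ, ∃ r ∈ P, (∑ i, |(1 + t n) * x i - r i|) ≤ 1 := by
    intro n
    have hz : (fun i => (1 + t n) * x i) ∈
        P + {x : Fin k → ℝ | (∑ i, |x i|) ≤ 1} := by
      rw [hcover]; trivial
    obtain ⟨a, ha, b, hb, hab⟩ := Set.mem_add.mp hz
    refine ⟨a, ha, ?_⟩
    have heq : ∀ i, (1 + t n) * x i - a i = b i := by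
      intro i
      have := congrFun hab i
      simp only [Pi.add_apply] at this
      linarith
    calc (∑ i, |(1 + t n) * x i - a i|) = ∑ i, |b i| := by
          exact Finset.sum_congr rfl fun i _ => by rw [heq i]
      _ ≤ 1 := hb
  choose r hrP hr1 using hy
  have hxsum_t : ∀ n, (∑ i, (1 + t n) * x i) = 1 + t n := by
    intro n; rw [← Finset.mul_sum, hsum, mul_one]
  have hrnorm : ∀ n, (∑ i, |r n i|) ≤ 2 + t n := by
    intro n
    have h1 : ∀ i, |r n i| ≤ |(1 + t n) * x i - r n i| + (1 + t n) * x i := by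
      intro i
      have hpos : 0 < (1 + t n) * x i := by
        have := ht_pos n; have := hx i; nlinarith
      have h2 := abs_sub_abs_le_abs_sub (r n i) ((1 + t n) * x i)
      rw [abs_sub_comm] at h2
      rw [abs_of_pos hpos] at h2
      linarith
    calc (∑ i, |r n i|) ≤ ∑ i, (|(1 + t n) * x i - r n i| + (1 + t n) * x i) :=
          Finset.sum_le_sum fun i _ => h1 i
      _ = (∑ i, |(1 + t n) * x i - r n i|) + ∑ i, (1 + t n) * x i :=
          Finset.sum_add_distrib
      _ ≤ 1 + (1 + t n) := add_le_add (hr1 n) (le_of_eq (hxsum_t n))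
      _ = 2 + t n := by ring
  have hrne : ∀ n, r n ≠ 0 := by
    intro n h0'
    have h1 := hr1 n
    rw [h0'] at h1
    have h2 : (∑ i, |(1 + t n) * x i - (0 : Fin k → ℝ) i|) = 1 + t n := by
      have heach : ∀ i : Fin k, |(1 + t n) * x i - (0 : Fin k → ℝ) i| = (1 + t n) * x i := by
        intro i
        have hpos : 0 < (1 + t n) * x i := by
          have := ht_pos n; have := hx i; nlinarith
        rw [Pi.zero_apply, sub_zero, abs_of_pos hpos]
      rw [Finset.sum_congr rfl fun i _ => heach i, hxsum_t n]
    rw [h2] at h1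
    have := ht_pos n
    linarith
  have hrge : ∀ n, 2 ≤ ∑ i, |r n i| := fun n => hsep0 _ (hrP n) (hrne n)
  -- compactness: subsequence converging
  have hmem : ∀ n, r n ∈ Metric.closedBall (0 : Fin k → ℝ) 3 := by
    intro n
    rw [Metric.mem_closedBall, dist_zero_right]
    rw [pi_norm_le_iff_of_nonneg (by norm_num)]
    intro i
    calc ‖r n i‖ = |r n i| := rfl
      _ ≤ ∑ j, |r n j| :=
          Finset.single_le_sum (f := fun j => |r n j|) (fun j _ => abs_nonneg _)
            (Finset.mem_univ i)
      _ ≤ 2 + t n := hrnorm n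
      _ ≤ 3 := by have := ht_le n; linarith
  obtain ⟨L, _, φ, hφ, hconv⟩ :=
    (isCompact_closedBall (0 : Fin k → ℝ) 3).tendsto_subseq hmem
  have hk0 : (0:ℝ) < k := by
    have : (2:ℝ) ≤ k := by exact_mod_cast hk
    linarith
  obtain ⟨N, hN⟩ := (Metric.tendsto_atTop.mp hconv) (1 / (2 * k)) (by positivity)
  set ρ : Fin k → ℝ := r (φ N) with hρ
  have hρP : ρ ∈ P := hrP (φ N)
  have hconst : ∀ n, N ≤ n → r (φ n) = ρ := by
    intro n hn
    apply hsep _ (hrP _) _ hρP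
    have h1 := hN n hn
    have h2 := hN N le_rfl
    simp only [Function.comp_apply] at h1 h2
    have key : ∀ (m : ℕ), dist (r (φ m)) L < 1 / (2*k) →
        ∀ i, |r (φ m) i - L i| < 1 / (2*k) := by
      intro m hm i
      calc |r (φ m) i - L i| = dist (r (φ m) i) (L i) := by
            rw [Real.dist_eq]
        _ ≤ dist (r (φ m)) L := dist_le_pi_dist _ _ i
        _ < 1 / (2*k) := hm
    have hlt : (∑ i, |r (φ n) i - ρ i|) < ∑ _i : Fin k, ((1:ℝ) / k) := by
      apply Finset.sum_lt_sum_of_nonempty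
      · exact Finset.univ_nonempty
      · intro i _
        have a1 := key n h1 i
        have a2 := key N h2 i
        have : |r (φ n) i - ρ i| ≤ |r (φ n) i - L i| + |L i - ρ i| := abs_sub_le _ _ _
        rw [abs_sub_comm (L i)] at this
        have hhalf : 1 / (2*k) + 1 / (2*k) = 1 / (k:ℝ) := by
          have hkne : (k:ℝ) ≠ 0 := ne_of_gt hk0
          rw [div_add_div _ _ (by positivity : (2:ℝ)*(k:ℝ) ≠ 0) (by positivity : (2:ℝ)*(k:ℝ) ≠ 0),
            div_eq_div_iff (by positivity) hkne]
          ring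
        rw [hρ]
        linarith
    have hsum1 : (∑ _i : Fin k, ((1:ℝ) / k)) = 1 := by
      rw [Finset.sum_const, Finset.card_univ, Fintype.card_fin]
      rw [nsmul_eq_mul, mul_one_div_cancel (ne_of_gt hk0)]
    rw [hsum1] at hlt
    linarith
  -- key per-coordinate inequality
  have star : ∀ j, ∀ n, N ≤ n →
      |(1 + t (φ n)) * x j - ρ j| + (1 + t (φ n)) * x j - |ρ j| ≤ t (φ n) := by
    intro j n hn
    have hA : (∑ i, |(1 + t (φ n)) * x i - ρ i|) ≤ 1 := by
      rw [← hconst n hn]; exact hr1 (φ n)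
    have hge : 2 ≤ ∑ i, |ρ i| := hrge (φ N)
    set τ := t (φ n)
    have hcomp : ∀ i ∈ Finset.univ.erase j,
        |ρ i| ≤ |(1 + τ) * x i - ρ i| + (1 + τ) * x i := by
      intro i _
      have hpos : 0 < (1 + τ) * x i := by
        have := ht_pos (φ n); have := hx i; nlinarith
      have h2 := abs_sub_abs_le_abs_sub (ρ i) ((1 + τ) * x i)
      rw [abs_sub_comm] at h2
      rw [abs_of_pos hpos] at h2
      linarith
    have e1 : (∑ i ∈ Finset.univ.erase j, |ρ i|) ≤
        ∑ i ∈ Finset.univ.erase j, (|(1 + τ) * x i - ρ i| + (1 + τ) * x i) :=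
      Finset.sum_le_sum hcomp
    have s1 := Finset.add_sum_erase Finset.univ (fun i => |ρ i|) (Finset.mem_univ j)
    have s2 := Finset.add_sum_erase Finset.univ
      (fun i => |(1 + τ) * x i - ρ i|) (Finset.mem_univ j)
    have s3 := Finset.add_sum_erase Finset.univ
      (fun i => (1 + τ) * x i) (Finset.mem_univ j)
    have s4 : (∑ i ∈ Finset.univ.erase j, (|(1 + τ) * x i - ρ i| + (1 + τ) * x i)) =
        (∑ i ∈ Finset.univ.erase j, |(1 + τ) * x i - ρ i|) +
        ∑ i ∈ Finset.univ.erase j, (1 + τ) * x i := Finset.sum_add_distrib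
    have s5 := hxsum_t (φ n)
    linarith
  -- ρ has nonnegative coordinates
  have hρ_pos : ∀ j, 0 ≤ ρ j := by
    intro j
    by_contra h
    push_neg at h
    obtain ⟨n0, hn0⟩ := exists_nat_one_div_lt (hx j)
    set n := max N n0 with hn
    have hs := star j n (le_max_left _ _)
    have hτx : t (φ n) < x j := by
      calc t (φ n) ≤ t n := ht_mono n (φ n) hφ.le_apply
        _ ≤ t n0 := ht_mono n0 n (le_max_right _ _)
        _ < x j := hn0
    have hpos : 0 < (1 + t (φ n)) * x j - ρ j := by
      have := ht_pos (φ n); have := hx j; nlinarith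
    rw [abs_of_pos hpos, abs_of_neg h] at hs
    have := ht_pos (φ n); have := hx j
    nlinarith
  -- ρ dominates x
  have hρ_ge : ∀ j, x j ≤ ρ j := by
    intro j
    by_contra h
    push_neg at h
    obtain ⟨n0, hn0⟩ := exists_nat_one_div_lt (sub_pos.2 h)
    set n := max N n0 with hn
    have hs := star j n (le_max_left _ _)
    have hτ : t (φ n) < x j - ρ j := by
      calc t (φ n) ≤ t n := ht_mono n (φ n) hφ.le_apply
        _ ≤ t n0 := ht_mono n0 n (le_max_right _ _)
        _ < x j - ρ j := hn0
    rw [abs_of_nonneg (hρ_pos j)] at hs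
    have h1 : (1 + t (φ n)) * x j - ρ j ≤ |(1 + t (φ n)) * x j - ρ j| := le_abs_self _
    have := ht_pos (φ n); have := hx j
    nlinarith
  have hρ_ne : ρ ≠ 0 := by
    intro hz
    have hj : ρ ⟨0, by omega⟩ = 0 := by rw [hz]; rfl
    have := hρ_ge ⟨0, by omega⟩
    have := hx ⟨0, by omega⟩
    linarith
  have habs : (∑ j, ρ j) = ∑ j, |ρ j| :=
    Finset.sum_congr rfl fun j _ => (abs_of_nonneg (hρ_pos j)).symm
  have h2le : 2 ≤ ∑ j, ρ j := by rw [habs]; exact hrge (φ N)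
  have hle2 : (∑ j, ρ j) ≤ 2 := by
    by_contra h
    push_neg at h
    obtain ⟨n0, hn0⟩ := exists_nat_one_div_lt (sub_pos.2 h)
    set n := max N n0 with hn
    have h1 := hrnorm (φ n)
    rw [hconst n (le_max_left _ _)] at h1
    have hτ : t (φ n) < (∑ j, ρ j) - 2 := by
      calc t (φ n) ≤ t n := ht_mono n (φ n) hφ.le_apply
        _ ≤ t n0 := ht_mono n0 n (le_max_right _ _)
        _ < _ := hn0
    rw [← habs] at h1
    linarith
  exact ⟨ρ, hρP, hρ_ne, hρ_ge, le_antisymm hle2 h2le⟩
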